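/- For every Lebesgue measurable set B ⊆ ℝ of positive Lebesgue measure, there exists a set F ⊆ B such that (i) F has positive Lebesgue outer measure, (ii) every Lebesgue measurable set contained in B \ F has Lebesgue measure zero, and (iii) no two distinct points of F are at a rational distance from one another. -/

import Mathlib

open Set Function Cardinal MeasureTheory

namespace RatDistAux

open Set Function Cardinal MeasureTheory

/-- Closed subsets of ℝ are at most continuum many. -/
lemma mk_closeds_le_continuum : #{C : Set ℝ // IsClosed C} ≤ 𝔠 := by
  have key : ∀ (U : Set ℝ), IsOpen U → U = ⋃ pq ∈ {pq : ℚ × ℚ | Ioo (pq.1 : ℝ) pq.2 ⊆ U},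
      Ioo (pq.1 : ℝ) pq.2 := by
    intro U hU
    ext x
    simp only [mem_iUnion, mem_setOf_eq]
    constructor
    · intro hx
      obtain ⟨ε, hε, hball⟩ := Metric.isOpen_iff.1 hU x hx
      rw [Real.ball_eq_Ioo] at hball
      obtain ⟨p, hp1, hp2⟩ := exists_rat_btwn (show x - ε < x by linarith)
      obtain ⟨q, hq1, hq2⟩ := exists_rat_btwn (show x < x + ε by linarith)
      exact ⟨(p, q), fun y hy => hball ⟨by exact lt_trans hp1 hy.1, lt_trans hy.2 hq2⟩,
        ⟨hp2, hq1⟩⟩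
    · rintro ⟨pq, hsub, hx⟩
      exact hsub hx
  have hinj : Function.Injective
      (fun C : {C : Set ℝ // IsClosed C} => {pq : ℚ × ℚ | Ioo (pq.1 : ℝ) pq.2 ⊆ (C.1)ᶜ}) := by
    rintro ⟨C, hC⟩ ⟨D, hD⟩ h
    simp only [Subtype.mk.injEq]
    have : Cᶜ = Dᶜ := by
      rw [key _ hC.isOpen_compl, key _ hD.isOpen_compl]
      simp only at h
      rw [h]
    simpa [compl_inj_iff] using this
  calc #{C : Set ℝ // IsClosed C} ≤ #(Set (ℚ × ℚ)) := mk_le_of_injective hinj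
    _ = 2 ^ ℵ₀ := by rw [mk_set]; simp
    _ = 𝔠 := two_power_aleph0

/-- A closed set of positive measure has cardinality at least the continuum. -/
lemma continuum_le_mk_of_closed_pos {K : Set ℝ} (hK : IsClosed K) (h : 0 < volume K) :
    𝔠 ≤ #K := by
  have hunc : ¬ K.Countable := by
    intro hc
    exact h.ne' (hc.measure_zero _)
  obtain ⟨f, hfr, -, hinj⟩ := hK.exists_nat_bool_injection_of_not_countable hunc
  have hinj' : Function.Injective (fun x : ℕ → Bool => (⟨f x, hfr ⟨x, rfl⟩⟩ : K)) := by
    intro a b hab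
    exact hinj (congrArg Subtype.val hab)
  simpa using mk_le_of_injective hinj'

section main
variable (B : Set ℝ)

variable (B : Set ℝ)

/-- closed positive-measure subsets of B -/
def Idx : Type := {K : Set ℝ // IsClosed K ∧ K ⊆ B ∧ 0 < volume K}

lemma mk_Idx_le : #(Idx B) ≤ 𝔠 := by
  have : Function.Injective (fun i : Idx B => (⟨i.1, i.2.1⟩ : {C : Set ℝ // IsClosed C})) := by
    rintro ⟨K, hK⟩ ⟨K', hK'⟩ h
    simp only [Subtype.mk.injEq] at h
    exact Subtype.ext h
  exact (mk_le_of_injective this).trans mk_closeds_le_continuum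

noncomputable def emb : Idx B ↪ (Cardinal.ord 𝔠).ToType := by
  have h : #(Idx B) ≤ #((Cardinal.ord 𝔠).ToType) := by
    rw [mk_ord_toType]; exact mk_Idx_le B
  exact (Cardinal.le_def _ _).1 h |>.some

def rel (i j : Idx B) : Prop := emb B i < emb B j

lemma rel_wf : WellFounded (rel B) :=
  InvImage.wf (emb B) (IsWellFounded.wf (r := ((· < ·) : (Cardinal.ord 𝔠).ToType → _ → Prop)))

lemma exists_pick (i : Idx B) (g : ∀ j, rel B j i → ℝ) :
    ∃ x, x ∈ i.1 ∧ ∀ j hj, ¬ ∃ q : ℚ, x - g j hj = (q : ℝ) := by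
  classical
  set bad : Set ℝ := Set.range (fun p : {j : Idx B // rel B j i} × ℚ => g p.1.1 p.1.2 + (p.2 : ℝ))
  have hsmall : #{j : Idx B // rel B j i} < 𝔠 := by
    have : Function.Injective (fun j : {j : Idx B // rel B j i} =>
        (⟨emb B j.1, j.2⟩ : Iio (emb B i))) := by
      rintro ⟨a, ha⟩ ⟨b, hb⟩ h
      simp only [Subtype.mk.injEq] at h ⊢
      exact (emb B).injective (congrArg Subtype.val h)
    exact lt_of_le_of_lt (mk_le_of_injective this) (mk_Iio_ord_toType _)
  have hbad : #bad < 𝔠 := by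
    calc #bad ≤ #({j : Idx B // rel B j i} × ℚ) := mk_range_le
      _ = #{j : Idx B // rel B j i} * ℵ₀ := by simp [mk_prod]
      _ < 𝔠 := mul_lt_of_lt aleph0_le_continuum hsmall aleph0_lt_continuum
  have hK : 𝔠 ≤ #(i.1) := continuum_le_mk_of_closed_pos i.2.1 i.2.2.2
  have : ¬ (i.1 ⊆ bad) := by
    intro hsub
    exact absurd (hK.trans (mk_le_mk_of_subset hsub)) (not_le.2 hbad)
  obtain ⟨x, hxK, hxbad⟩ := not_subset.1 this
  refine ⟨x, hxK, ?_⟩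
  rintro j hj ⟨q, hq⟩
  exact hxbad ⟨(⟨j, hj⟩, q), by simp; linarith⟩

noncomputable def pick : Idx B → ℝ :=
  (rel_wf B).fix (fun i g => Classical.choose (exists_pick B i g))

lemma pick_spec (i : Idx B) :
    pick B i ∈ i.1 ∧ ∀ j (hj : rel B j i), ¬ ∃ q : ℚ, pick B i - pick B j = (q : ℝ) := by
  have h := (rel_wf B).fix_eq (fun i g => Classical.choose (exists_pick B i g)) i
  rw [pick, h]
  exact Classical.choose_spec (exists_pick B i (fun j _ => pick B j))


end main

end RatDistAux

open RatDistAux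

/-- Every measurable set `B` of positive Lebesgue measure has a subset `F` of positive
outer measure such that every measurable subset of `B \ F` is null and no two distinct
points of `F` are at rational distance. -/
theorem exists_full_subset_no_rational_distances_measure (B : Set ℝ)
    (hB : MeasurableSet B) (hB0 : 0 < MeasureTheory.volume B) :
    ∃ F : Set ℝ, F ⊆ B ∧ 0 < MeasureTheory.volume F ∧
      (∀ S : Set ℝ, S ⊆ B \ F → MeasurableSet S → MeasureTheory.volume S = 0) ∧
      (∀ x ∈ F, ∀ y ∈ F, x ≠ y → ¬ ∃ q : ℚ, |x - y| = (q : ℝ)) := by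
  classical
  set F : Set ℝ := Set.range (pick B) with hF
  have hFB : F ⊆ B := by
    rintro x ⟨i, rfl⟩
    exact i.2.2.1 (pick_spec B i).1
  -- key: no rational difference between distinct picks
  have hnr : ∀ i j : Idx B, pick B i ≠ pick B j → ¬ ∃ q : ℚ, pick B i - pick B j = (q : ℝ) := by
    intro i j hne
    have hij : i ≠ j := fun h => hne (congrArg _ h)
    have : emb B i < emb B j ∨ emb B j < emb B i :=
      Or.imp id id (lt_or_gt_of_ne (fun h => hij ((emb B).injective h)))
    rcases this with h | h
    · rintro ⟨q, hq⟩
      exact (pick_spec B j).2 i h ⟨-q, by push_cast; linarith⟩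
    · exact (pick_spec B i).2 j h
  -- (iii)
  have hrat : ∀ x ∈ F, ∀ y ∈ F, x ≠ y → ¬ ∃ q : ℚ, |x - y| = (q : ℝ) := by
    rintro x ⟨i, rfl⟩ y ⟨j, rfl⟩ hne ⟨q, hq⟩
    rcases abs_cases (pick B i - pick B j) with ⟨h1, -⟩ | ⟨h1, -⟩
    · exact hnr i j hne ⟨q, by rw [← h1, hq]⟩
    · exact hnr i j hne ⟨-q, by push_cast; linarith⟩
  -- (ii)
  have hnull : ∀ S : Set ℝ, S ⊆ B \ F → MeasurableSet S → volume S = 0 := by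
    intro S hsub hmeas
    by_contra h0
    have hpos : 0 < volume S := pos_iff_ne_zero.2 h0
    -- find n with positive measure in a ball
    have hcover : S = ⋃ n : ℕ, S ∩ Metric.ball (0 : ℝ) (n + 1) := by
      ext x
      simp only [mem_iUnion, mem_inter_iff, Metric.mem_ball, dist_zero_right]
      constructor
      · intro hx
        obtain ⟨n, hn⟩ := exists_nat_gt ‖x‖
        exact ⟨n, hx, by push_cast; linarith⟩
      · rintro ⟨n, hx, -⟩; exact hx
    have : ∃ n : ℕ, volume (S ∩ Metric.ball (0 : ℝ) (n + 1)) ≠ 0 := by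
      by_contra hall
      push_neg at hall
      have : volume S = 0 := by
        rw [hcover]
        exact measure_iUnion_null hall
      exact h0 this
    obtain ⟨n, hn⟩ := this
    set S' := S ∩ Metric.ball (0 : ℝ) (n + 1) with hS'
    have hmeas' : MeasurableSet S' := hmeas.inter measurableSet_ball
    have hfin : volume S' ≠ ⊤ := by
      refine ne_top_of_le_ne_top ?_ (measure_mono inter_subset_right)
      exact (MeasureTheory.measure_ball_lt_top).ne
    obtain ⟨K, hKS, hKc, hKm⟩ := hmeas'.exists_isCompact_lt_add hfin
      (ε := volume S') (pos_iff_ne_zero.2 (pos_iff_ne_zero.2 hn).ne' |>.ne')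
    have hKpos : 0 < volume K := by
      by_contra hK0
      push_neg at hK0
      have : volume K = 0 := le_antisymm hK0 zero_le
      rw [this, zero_add] at hKm
      exact lt_irrefl _ hKm
    have hKB : K ⊆ B := fun x hx => ((hsub ((hKS hx).1 : _ ∈ S)).1 : x ∈ B)
    set i : Idx B := ⟨K, hKc.isClosed, hKB, hKpos⟩
    have : pick B i ∈ F := ⟨i, rfl⟩
    have hmem : pick B i ∈ K := (pick_spec B i).1
    exact (hsub (hKS hmem).1).2 this
  refine ⟨F, hFB, ?_, hnull, hrat⟩
  -- (i)
  by_contra h0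
  push_neg at h0
  have hF0 : volume F = 0 := le_antisymm h0 zero_le
  set N := toMeasurable volume F with hN
  have hFN : F ⊆ N := subset_toMeasurable _ _
  have hN0 : volume N = 0 := by rw [hN, measure_toMeasurable]; exact hF0
  have hBN : volume (B \ N) = 0 :=
    hnull _ (diff_subset_diff_right hFN) (hB.diff (measurableSet_toMeasurable _ _))
  have : volume B = 0 := by
    have := measure_diff_null (μ := volume) (s := B) hN0
    rw [this] at hBN
    exact hBN
  exact hB0.ne' this
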